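/- Let 𝒳 and 𝒴 be finite alphabets. A matrix M ∈ ℝ^{|𝒴|×|𝒳|} is the divergence transfer matrix of some joint pmf P_{X,Y} on 𝒳×𝒴 with strictly positive marginals — i.e., M(y,x) = P_{X,Y}(x,y)/√(P_X(x)P_Y(y)) for some such P_{X,Y} — if and only if: all entries of M are nonnegative, ‖M‖₂ = 1, there exists an entrywise strictly positive vector ψ^X ∈ ℝ^{|𝒳|} with MᵀM ψ^X = ψ^X, and there exists an entrywise strictly positive vector ψ^Y ∈ ℝ^{|𝒴|} with MMᵀ ψ^Y = ψ^Y. -/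

import Mathlib

open Matrix

/-- The `i`-th largest element (0-indexed) of a finite family of real numbers
(by convention `0` if `i` is out of range). -/
noncomputable def ithLargest {ι : Type*} [Fintype ι] (f : ι → ℝ) (i : ℕ) : ℝ :=
  (((Finset.univ.val.map f).sort (· ≤ ·)).reverse).getD i 0

/-- The `i`-th largest singular value (0-indexed) of a real matrix `A`: the square root of
the `i`-th largest eigenvalue of `Aᴴ * A` (over `ℝ`, `Aᴴ = Aᵀ`). -/
noncomputable def singularValue {m n : Type*} [Fintype m] [Fintype n] [DecidableEq n]
    (A : Matrix m n ℝ) (i : ℕ) : ℝ :=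
  Real.sqrt (ithLargest (Matrix.isHermitian_conjTranspose_mul_self A).eigenvalues i)

/-- The spectral (operator) norm of a real matrix: its largest singular value. -/
noncomputable def matrixSpectralNorm {m n : Type*} [Fintype m] [Fintype n] [DecidableEq n]
    (A : Matrix m n ℝ) : ℝ :=
  singularValue A 0

lemma ithLargest_zero_spec {ι : Type*} [Fintype ι] [Nonempty ι] (f : ι → ℝ) :
    (∃ j, f j = ithLargest f 0) ∧ ∀ i, f i ≤ ithLargest f 0 := by
  set l := (Finset.univ.val.map f).sort (· ≤ ·) with hl
  have hmem : ∀ x : ℝ, x ∈ l ↔ ∃ j, f j = x := by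
    intro x
    rw [hl, Multiset.mem_sort, Multiset.mem_map]
    simp
  have hs : l.Pairwise (· ≤ ·) := Multiset.pairwise_sort _ _
  cases hr : l.reverse with
  | nil =>
    exfalso
    have hln : l = [] := by simpa using congrArg List.reverse hr
    have := (hmem (f (Classical.arbitrary ι))).2 ⟨_, rfl⟩
    rw [hln] at this
    simp at this
  | cons a t =>
    have hval : ithLargest f 0 = a := by
      unfold ithLargest
      rw [← hl, hr]
      rfl
    have hsr : (a :: t).Pairwise (fun x y => y ≤ x) := by
      rw [← hr]
      rw [List.pairwise_reverse]
      exact hs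
    constructor
    · rw [hval]
      have : a ∈ l := by
        have : a ∈ l.reverse := by rw [hr]; exact List.mem_cons_self
        simpa using this
      exact (hmem a).1 this
    · intro i
      rw [hval]
      have hi : f i ∈ a :: t := by
        rw [← hr]
        simpa using (hmem (f i)).2 ⟨i, rfl⟩
      rcases List.mem_cons.1 hi with h | h
      · exact h.le
      · exact List.rel_of_pairwise_cons hsr h

lemma symm_dot {n : Type*} [Fintype n] [DecidableEq n] (A : Matrix n n ℝ) (hA : Aᵀ = A)
    (u w : n → ℝ) : (A *ᵥ u) ⬝ᵥ w = u ⬝ᵥ (A *ᵥ w) := by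
  rw [← Matrix.vecMul_transpose, hA, ← Matrix.dotProduct_mulVec]

lemma dot_self_pos {X : Type*} [Fintype X] (v : X → ℝ) (h : v ≠ 0) : 0 < v ⬝ᵥ v :=
  lt_of_le_of_ne (Finset.sum_nonneg fun _ _ => mul_self_nonneg _)
    (Ne.symm ((dotProduct_self_eq_zero (v := v)).ne.mpr h))

lemma mulVec_entry {Y X : Type*} [Fintype X] (M : Matrix Y X ℝ) (v : X → ℝ) (y : Y) :
    (M *ᵥ v) y = ∑ x, M y x * v x := by
  simp [Matrix.mulVec, dotProduct]

lemma spectralNorm_eq_one_of {X Y : Type*} [Fintype X] [Fintype Y] [DecidableEq X]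
    [Nonempty X] (M : Matrix Y X ℝ)
    (hbd : ∀ v : X → ℝ, (M *ᵥ v) ⬝ᵥ (M *ᵥ v) ≤ v ⬝ᵥ v)
    (ψ : X → ℝ) (hψ : ψ ≠ 0) (heig : (Mᵀ * M) *ᵥ ψ = ψ) :
    matrixSpectralNorm M = 1 := by
  set hA := Matrix.isHermitian_conjTranspose_mul_self M with hAdef
  have hAt : (Mᵀ * M)ᵀ = Mᵀ * M := by
    rw [Matrix.transpose_mul, Matrix.transpose_transpose]
  have hle : ∀ i, hA.eigenvalues i ≤ 1 := by
    intro i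
    set v : X → ℝ := ⇑(hA.eigenvectorBasis i) with hv
    have hvne : v ≠ 0 := by
      have := hA.eigenvectorBasis.orthonormal.ne_zero i
      intro hc
      apply this
      ext x
      exact congrFun hc x
    have hmv : (Mᵀ * M) *ᵥ v = hA.eigenvalues i • v := hA.mulVec_eigenvectorBasis i
    have h1 : v ⬝ᵥ ((Mᵀ * M) *ᵥ v) = (M *ᵥ v) ⬝ᵥ (M *ᵥ v) := by
      rw [← Matrix.mulVec_mulVec, Matrix.dotProduct_mulVec, Matrix.vecMul_transpose]
    have h2 : v ⬝ᵥ ((Mᵀ * M) *ᵥ v) = hA.eigenvalues i * (v ⬝ᵥ v) := by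
      rw [hmv, dotProduct_smul, smul_eq_mul]
    have h3 : hA.eigenvalues i * (v ⬝ᵥ v) ≤ v ⬝ᵥ v := by
      rw [← h2, h1]; exact hbd v
    have h4 : 0 < v ⬝ᵥ v := dot_self_pos v hvne
    nlinarith
  have hex : ∃ i, hA.eigenvalues i = 1 := by
    by_contra hc
    push_neg at hc
    apply hψ
    have hcoef : ∀ i, (⇑(hA.eigenvectorBasis i) : X → ℝ) ⬝ᵥ ψ = 0 := by
      intro i
      have h1 : ((Mᵀ * M) *ᵥ ⇑(hA.eigenvectorBasis i)) ⬝ᵥ ψ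
          = ⇑(hA.eigenvectorBasis i) ⬝ᵥ ((Mᵀ * M) *ᵥ ψ) := symm_dot _ hAt _ _
      have h2 : (Mᵀ * M) *ᵥ ⇑(hA.eigenvectorBasis i)
          = hA.eigenvalues i • ⇑(hA.eigenvectorBasis i) := hA.mulVec_eigenvectorBasis i
      rw [heig, h2, smul_dotProduct, smul_eq_mul] at h1
      have : (hA.eigenvalues i - 1) * (⇑(hA.eigenvectorBasis i) ⬝ᵥ ψ) = 0 := by
        ring_nf; linarith [h1]
      rcases mul_eq_zero.1 this with h | h
      · exact absurd (by linarith : hA.eigenvalues i = 1) (hc i)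
      · exact h
    have hψ' : (WithLp.toLp 2 ψ : EuclideanSpace ℝ X) = 0 := by
      apply hA.eigenvectorBasis.repr.injective
      simp only [map_zero]
      ext i
      rw [hA.eigenvectorBasis.repr_apply_apply]
      simpa [PiLp.inner_apply, RCLike.inner_apply, dotProduct, mul_comm] using hcoef i
    ext x
    exact congrArg (fun w : EuclideanSpace ℝ X => w x) hψ'
  rcases ithLargest_zero_spec hA.eigenvalues with ⟨⟨j, hj⟩, hub⟩
  rcases hex with ⟨i, hi⟩
  have : ithLargest hA.eigenvalues 0 = 1 := le_antisymm (hj ▸ hle j) (hi ▸ hub i)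
  show Real.sqrt (ithLargest hA.eigenvalues 0) = 1
  rw [this, Real.sqrt_one]

theorem stmt_4 {X Y : Type*} [Fintype X] [Fintype Y] [DecidableEq X] [DecidableEq Y]
    [Nonempty X] [Nonempty Y] (M : Matrix Y X ℝ) :
    (∃ P : X → Y → ℝ, (∀ x y, 0 ≤ P x y) ∧ (∑ x, ∑ y, P x y = 1) ∧
        (∀ x, 0 < ∑ y, P x y) ∧ (∀ y, 0 < ∑ x, P x y) ∧
        ∀ x y, M y x = P x y / Real.sqrt ((∑ y', P x y') * (∑ x', P x' y)))
    ↔ ((∀ y x, 0 ≤ M y x) ∧ matrixSpectralNorm M = 1 ∧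
       (∃ ψX : X → ℝ, (∀ x, 0 < ψX x) ∧ (Mᵀ * M).mulVec ψX = ψX) ∧
       (∃ ψY : Y → ℝ, (∀ y, 0 < ψY y) ∧ (M * Mᵀ).mulVec ψY = ψY)) := by
  constructor
  · rintro ⟨P, hP0, hPsum, hp, hq, hM⟩
    set ψX : X → ℝ := fun x => Real.sqrt (∑ y, P x y) with hψXdef
    set ψY : Y → ℝ := fun y => Real.sqrt (∑ x, P x y) with hψYdef
    have hψXpos : ∀ x, 0 < ψX x := fun x => Real.sqrt_pos.2 (hp x)
    have hψYpos : ∀ y, 0 < ψY y := fun y => Real.sqrt_pos.2 (hq y)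
    have hsq : ∀ x y, Real.sqrt ((∑ y', P x y') * (∑ x', P x' y)) = ψX x * ψY y :=
      fun x y => Real.sqrt_mul (hp x).le _
    -- M *ᵥ ψX = ψY
    have hMX : M *ᵥ ψX = ψY := by
      ext y
      rw [mulVec_entry]
      have : ∀ x : X, M y x * ψX x = P x y / ψY y := by
        intro x
        rw [hM x y, hsq x y, div_mul_eq_mul_div, mul_comm (P x y) (ψX x),
          mul_div_mul_left _ _ (hψXpos x).ne']
      rw [Finset.sum_congr rfl fun x _ => this x, ← Finset.sum_div]
      show (∑ x, P x y) / Real.sqrt (∑ x, P x y) = ψY y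
      rw [Real.div_sqrt]
    -- Mᵀ *ᵥ ψY = ψX
    have hMY : Mᵀ *ᵥ ψY = ψX := by
      ext x
      rw [mulVec_entry]
      have : ∀ y : Y, Mᵀ x y * ψY y = P x y / ψX x := by
        intro y
        rw [Matrix.transpose_apply, hM x y, hsq x y, div_mul_eq_mul_div,
          mul_comm (ψX x) (ψY y), mul_comm (P x y) (ψY y),
          mul_div_mul_left _ _ (hψYpos y).ne']
      rw [Finset.sum_congr rfl fun y _ => this y, ← Finset.sum_div]
      show (∑ y, P x y) / Real.sqrt (∑ y, P x y) = ψX x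
      rw [Real.div_sqrt]
    have heigX : (Mᵀ * M) *ᵥ ψX = ψX := by
      rw [← Matrix.mulVec_mulVec, hMX, hMY]
    have heigY : (M * Mᵀ) *ᵥ ψY = ψY := by
      rw [← Matrix.mulVec_mulVec, hMY, hMX]
    have hMnn : ∀ y x, 0 ≤ M y x := by
      intro y x
      rw [hM x y]
      exact div_nonneg (hP0 x y) (Real.sqrt_nonneg _)
    refine ⟨hMnn, ?_, ⟨ψX, hψXpos, heigX⟩, ⟨ψY, hψYpos, heigY⟩⟩
    -- spectral norm
    apply spectralNorm_eq_one_of M ?_ ψX ?_ heigX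
    · intro v
      have hterm : ∀ y, ((M *ᵥ v) y) ^ 2 ≤ ∑ x, P x y * v x ^ 2 / (∑ y', P x y') := by
        intro y
        have hrow : (M *ᵥ v) y = (∑ x, P x y * v x / ψX x) / ψY y := by
          rw [mulVec_entry, Finset.sum_div]
          exact Finset.sum_congr rfl fun x _ => by
            rw [hM x y, hsq x y, div_div]; ring
        have hcs : (∑ x, P x y * v x / ψX x) ^ 2
            ≤ (∑ x, P x y) * ∑ x, P x y * v x ^ 2 / (∑ y', P x y') := by
          apply Finset.sum_sq_le_sum_mul_sum_of_sq_eq_mul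
          · exact fun x _ => hP0 x y
          · exact fun x _ => div_nonneg (mul_nonneg (hP0 x y) (sq_nonneg _)) (hp x).le
          · intro x _
            have h1 : ψX x ^ 2 = ∑ y', P x y' := Real.sq_sqrt (hp x).le
            have h2 : ψX x ≠ 0 := (hψXpos x).ne'
            rw [div_pow, h1, mul_div_assoc']
            congr 1
            ring
        have hy2 : ψY y ^ 2 = ∑ x', P x' y := Real.sq_sqrt (hq y).le
        rw [hrow, div_pow, hy2]
        rw [div_le_iff₀ (hq y)]
        calc (∑ x, P x y * v x / ψX x) ^ 2
            ≤ (∑ x, P x y) * ∑ x, P x y * v x ^ 2 / (∑ y', P x y') := hcs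
          _ = (∑ x, P x y * v x ^ 2 / (∑ y', P x y')) * ∑ x, P x y := by ring
      calc (M *ᵥ v) ⬝ᵥ (M *ᵥ v) = ∑ y, ((M *ᵥ v) y) ^ 2 := by
            simp [dotProduct, sq]
        _ ≤ ∑ y, ∑ x, P x y * v x ^ 2 / (∑ y', P x y') :=
            Finset.sum_le_sum fun y _ => hterm y
        _ = ∑ x, (v x) ^ 2 := by
            rw [Finset.sum_comm]
            refine Finset.sum_congr rfl fun x _ => ?_
            rw [← Finset.sum_div, ← Finset.sum_mul, mul_comm (∑ y, P x y) ((v x) ^ 2),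
              mul_div_assoc, div_self (hp x).ne', mul_one]
        _ = v ⬝ᵥ v := by simp [dotProduct, sq]
    · intro hc
      have := congrFun hc (Classical.arbitrary X)
      exact absurd this (hψXpos _).ne'
  · rintro ⟨hnn, _, ⟨ψX, hψXpos, hψXeig⟩, ⟨ψY, hψYpos, hψYeig⟩⟩
    set b : Y → ℝ := M *ᵥ ψX with hbdef
    have hbX : Mᵀ *ᵥ b = ψX := by
      rw [hbdef, Matrix.mulVec_mulVec]
      exact hψXeig
    have hbpos : ∀ y, 0 < b y := by
      intro y
      have hbnn : 0 ≤ b y := by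
        rw [hbdef, mulVec_entry]
        exact Finset.sum_nonneg fun x _ => mul_nonneg (hnn y x) (hψXpos x).le
      rcases hbnn.lt_or_eq with h | h
      · exact h
      exfalso
      have hrow0 : ∀ x, M y x = 0 := by
        intro x
        have := (Finset.sum_eq_zero_iff_of_nonneg
          (fun x _ => mul_nonneg (hnn y x) (hψXpos x).le)).1 ?_ x (Finset.mem_univ x)
        · rcases mul_eq_zero.1 this with h' | h'
          · exact h'
          · exact absurd h' (hψXpos x).ne'
        · rw [hbdef, mulVec_entry] at h; exact h.symm
      have : ((M * Mᵀ) *ᵥ ψY) y = 0 := by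
        rw [← Matrix.mulVec_mulVec, mulVec_entry]
        exact Finset.sum_eq_zero fun x _ => by rw [hrow0 x, zero_mul]
      rw [hψYeig] at this
      exact absurd this (hψYpos y).ne'
    set S : ℝ := ∑ x, ψX x ^ 2 with hSdef
    have hS : 0 < S :=
      Finset.sum_pos (fun x _ => pow_pos (hψXpos x) 2) Finset.univ_nonempty
    refine ⟨fun x y => ψX x * b y * M y x / S, ?_, ?_, ?_, ?_, ?_⟩
    · intro x y
      exact div_nonneg (mul_nonneg (mul_nonneg (hψXpos x).le (hbpos y).le) (hnn y x)) hS.le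
    all_goals {
      have hp' : ∀ x, (∑ y, ψX x * b y * M y x / S) = ψX x ^ 2 / S := by
        intro x
        have h1 : (∑ y, ψX x * b y * M y x / S) = ψX x * (∑ y, M y x * b y) / S := by
          rw [Finset.mul_sum, Finset.sum_div]
          exact Finset.sum_congr rfl fun y _ => by ring
        have h2 : (∑ y, M y x * b y) = ψX x := by
          have := congrFun hbX x
          rw [mulVec_entry] at this
          simpa [Matrix.transpose_apply] using this
        rw [h1, h2, sq]
      have hq' : ∀ y, (∑ x, ψX x * b y * M y x / S) = b y ^ 2 / S := by
        intro y
        have h1 : (∑ x, ψX x * b y * M y x / S) = b y * (∑ x, M y x * ψX x) / S := by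
          rw [Finset.mul_sum, Finset.sum_div]
          exact Finset.sum_congr rfl fun x _ => by ring
        have h2 : (∑ x, M y x * ψX x) = b y := by
          rw [hbdef, mulVec_entry]
        rw [h1, h2, sq]
      first
      | -- total sum = 1
        (rw [Finset.sum_congr rfl fun x _ => hp' x, ← Finset.sum_div, ← hSdef,
          div_self hS.ne'])
      | -- positivity of marginals
        (intro x; rw [hp' x]; exact div_pos (pow_pos (hψXpos x) 2) hS)
      | (intro y; rw [hq' y]; exact div_pos (pow_pos (hbpos y) 2) hS)
      | -- DTM identity
        (intro x y
         rw [hp' x, hq' y]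
         have hsq2 : Real.sqrt (ψX x ^ 2 / S * (b y ^ 2 / S)) = ψX x * b y / S := by
           rw [show ψX x ^ 2 / S * (b y ^ 2 / S) = (ψX x * b y / S) ^ 2 by ring]
           exact Real.sqrt_sq
             (div_nonneg (mul_nonneg (hψXpos x).le (hbpos y).le) hS.le)
         rw [hsq2, eq_div_iff (by
           exact div_ne_zero (mul_ne_zero (hψXpos x).ne' (hbpos y).ne') hS.ne')]
         ring)
    }
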